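/- Let j ≥ 2 and let f ∈ C[0,1] be decreasing and convex. Then B_{n,j} f ≥ B_n f ≥ f pointwise on [0,1] for all n ≥ j. -/
import Mathlib


open Set Finset

/-- Bernstein basis polynomial `p_{n,k}(x) = C(n,k) x^k (1-x)^{n-k}`. -/
noncomputable def bp (n k : ℕ) (x : ℝ) : ℝ :=
  (n.choose k : ℝ) * x ^ k * (1 - x) ^ (n - k)

/-- AKR node `t_{n,k}^j = (k(k-1)⋯(k-j+1)/(n(n-1)⋯(n-j+1)))^{1/j}`. -/
noncomputable def akrNode (n j k : ℕ) : ℝ :=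
  ((∏ i ∈ Finset.range j, ((k : ℝ) - i)) / (∏ i ∈ Finset.range j, ((n : ℝ) - i))) ^ ((j : ℝ)⁻¹)

/-- Classical Bernstein operator. -/
noncomputable def bern (n : ℕ) (f : ℝ → ℝ) (x : ℝ) : ℝ :=
  ∑ k ∈ Finset.range (n + 1), f ((k : ℝ) / n) * bp n k x

/-- Aldaz–Kounchev–Render operator. -/
noncomputable def akr (n j : ℕ) (f : ℝ → ℝ) (x : ℝ) : ℝ :=
  ∑ k ∈ Finset.range (n + 1), f (akrNode n j k) * bp n k x

/-- Bivariate tensor-product Bernstein operator. -/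
noncomputable def bern2 (n m : ℕ) (f : ℝ → ℝ → ℝ) (x y : ℝ) : ℝ :=
  ∑ i ∈ Finset.range (n + 1), ∑ k ∈ Finset.range (m + 1),
    f ((i : ℝ) / n) ((k : ℝ) / m) * bp n i x * bp m k y

/-- Bivariate tensor-product AKR operator. -/
noncomputable def akr2 (n m j : ℕ) (f : ℝ → ℝ → ℝ) (x y : ℝ) : ℝ :=
  ∑ i ∈ Finset.range (n + 1), ∑ k ∈ Finset.range (m + 1),
    f (akrNode n j i) (akrNode m j k) * bp n i x * bp m k y

lemma bp_eq (n k : ℕ) (x : ℝ) : bp n k x = (bernsteinPolynomial ℝ n k).eval x := by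
  simp [bp, bernsteinPolynomial]
lemma bp_nonneg (n k : ℕ) {x : ℝ} (hx : x ∈ Icc (0:ℝ) 1) : 0 ≤ bp n k x := by
  obtain ⟨h0, h1⟩ := hx
  have h2 : (0:ℝ) ≤ 1 - x := by linarith
  have := n.choose k
  unfold bp
  positivity
lemma sum_bp (n : ℕ) (x : ℝ) : ∑ k ∈ Finset.range (n + 1), bp n k x = 1 := by
  have := congrArg (Polynomial.eval x) (bernsteinPolynomial.sum ℝ n)
  simpa [bp_eq, Polynomial.eval_finset_sum] using this
lemma sum_mul_bp (n : ℕ) (x : ℝ) :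
    ∑ k ∈ Finset.range (n + 1), (k : ℝ) * bp n k x = n * x := by
  have := congrArg (Polynomial.eval x) (bernsteinPolynomial.sum_smul ℝ n)
  simpa [bp_eq, Polynomial.eval_finset_sum] using this
lemma akrNode_le (n j k : ℕ) (hj : 1 ≤ j) (hjn : j ≤ n) (hk : k ≤ n) :
    0 ≤ akrNode n j k ∧ akrNode n j k ≤ (k : ℝ) / n := by
  have hn0 : (0:ℝ) < n := by
    have : 0 < n := lt_of_lt_of_le hj hjn
    exact_mod_cast this
  have hkn : (0:ℝ) ≤ (k:ℝ) / n := by positivity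
  have hjne : ((j:ℝ))⁻¹ ≠ 0 := by
    have : 0 < j := hj
    simp [Nat.pos_iff_ne_zero.mp this]
  by_cases hkj : k < j
  · -- numerator product has a zero factor
    have hP : (∏ i ∈ Finset.range j, ((k : ℝ) - i)) = 0 := by
      apply Finset.prod_eq_zero (Finset.mem_range.mpr hkj)
      simp
    rw [akrNode, hP, zero_div, Real.zero_rpow hjne]
    exact ⟨le_refl 0, hkn⟩
  · push_neg at hkj
    have hQpos : ∀ i ∈ Finset.range j, (0:ℝ) < (n : ℝ) - i := by
      intro i hi
      have hi' : i < j := Finset.mem_range.mp hi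
      have : i < n := lt_of_lt_of_le hi' hjn
      have : (i:ℝ) < n := by exact_mod_cast this
      linarith
    have hfac : ∀ i ∈ Finset.range j, (0:ℝ) ≤ ((k:ℝ) - i) / ((n:ℝ) - i) ∧
        ((k:ℝ) - i) / ((n:ℝ) - i) ≤ (k:ℝ) / n := by
      intro i hi
      have hi' : i < j := Finset.mem_range.mp hi
      have hik : i < k := lt_of_lt_of_le hi' hkj
      have hikR : (i:ℝ) ≤ k := by exact_mod_cast hik.le
      have hni := hQpos i hi
      constructor
      · apply div_nonneg (by linarith) hni.le
      · rw [div_le_div_iff₀ hni hn0]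
        have hkR : (k:ℝ) ≤ n := by exact_mod_cast hk
        have hiR : (0:ℝ) ≤ i := by positivity
        nlinarith
    have hratio : (∏ i ∈ Finset.range j, ((k : ℝ) - i)) / (∏ i ∈ Finset.range j, ((n : ℝ) - i))
        = ∏ i ∈ Finset.range j, (((k:ℝ) - i) / ((n:ℝ) - i)) := by
      rw [Finset.prod_div_distrib]
    have hr0 : 0 ≤ ∏ i ∈ Finset.range j, (((k:ℝ) - i) / ((n:ℝ) - i)) :=
      Finset.prod_nonneg fun i hi => (hfac i hi).1
    have hrle : ∏ i ∈ Finset.range j, (((k:ℝ) - i) / ((n:ℝ) - i)) ≤ ((k:ℝ)/n) ^ j := by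
      calc ∏ i ∈ Finset.range j, (((k:ℝ) - i) / ((n:ℝ) - i))
          ≤ ∏ i ∈ Finset.range j, ((k:ℝ)/n) :=
            Finset.prod_le_prod (fun i hi => (hfac i hi).1) (fun i hi => (hfac i hi).2)
        _ = ((k:ℝ)/n) ^ j := by rw [Finset.prod_const, Finset.card_range]
    rw [akrNode, hratio]
    constructor
    · exact Real.rpow_nonneg hr0 _
    · have h1 : (∏ i ∈ Finset.range j, (((k:ℝ) - i) / ((n:ℝ) - i))) ^ ((j:ℝ)⁻¹)
          ≤ (((k:ℝ)/n) ^ j) ^ ((j:ℝ)⁻¹) := by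
        apply Real.rpow_le_rpow hr0 hrle (by positivity)
      have h2 : (((k:ℝ)/n) ^ j) ^ ((j:ℝ)⁻¹) = (k:ℝ)/n := by
        rw [← Real.rpow_natCast ((k:ℝ)/n) j, ← Real.rpow_mul hkn]
        rw [mul_inv_cancel₀ (by exact_mod_cast Nat.pos_iff_ne_zero.mp hj), Real.rpow_one]
      rw [h2] at h1
      exact h1

theorem stmt10 (j n : ℕ) (hj : 2 ≤ j) (hn : j ≤ n) (f : ℝ → ℝ)
    (hfc : ContinuousOn f (Icc 0 1))
    (hanti : AntitoneOn f (Icc 0 1))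
    (hconv : ConvexOn ℝ (Icc 0 1) f) :
    ∀ x ∈ Icc (0:ℝ) 1, bern n f x ≤ akr n j f x ∧ f x ≤ bern n f x := by
  intro x hx
  have hn0 : 0 < n := lt_of_lt_of_le (lt_of_lt_of_le two_pos hj) hn
  have hnR : (0:ℝ) < n := by exact_mod_cast hn0
  have hmem : ∀ k ∈ Finset.range (n + 1), (k:ℝ)/n ∈ Icc (0:ℝ) 1 := by
    intro k hk
    have hk' : k ≤ n := Nat.lt_succ_iff.mp (Finset.mem_range.mp hk)
    have : (k:ℝ) ≤ n := by exact_mod_cast hk'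
    constructor
    · positivity
    · rw [div_le_one hnR]; exact this
  constructor
  · apply Finset.sum_le_sum
    intro k hk
    have hk' : k ≤ n := Nat.lt_succ_iff.mp (Finset.mem_range.mp hk)
    obtain ⟨h0, hle⟩ := akrNode_le n j k (le_trans one_le_two hj) hn hk'
    have hkn := hmem k hk
    have hnode : akrNode n j k ∈ Icc (0:ℝ) 1 := ⟨h0, le_trans hle hkn.2⟩
    exact mul_le_mul_of_nonneg_right (hanti hnode hkn hle) (bp_nonneg n k hx)
  · have hx' : x = ∑ k ∈ Finset.range (n + 1), bp n k x • ((k:ℝ)/n) := by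
      have := sum_mul_bp n x
      simp only [smul_eq_mul]
      rw [Finset.sum_congr rfl (fun k _ => by ring : ∀ k ∈ Finset.range (n+1),
        bp n k x * ((k:ℝ)/n) = (k:ℝ) * bp n k x / n)]
      rw [← Finset.sum_div, this, mul_comm, mul_div_assoc, div_self hnR.ne', mul_one]
    calc f x = f (∑ k ∈ Finset.range (n + 1), bp n k x • ((k:ℝ)/n)) := by rw [← hx']
      _ ≤ ∑ k ∈ Finset.range (n + 1), bp n k x • f ((k:ℝ)/n) :=
          hconv.map_sum_le (fun k _ => bp_nonneg n k hx) (sum_bp n x) hmem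
      _ = bern n f x := by
          rw [bern]; exact Finset.sum_congr rfl fun k _ => by rw [smul_eq_mul, mul_comm]
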